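/- Terminal state of the grabbing particle system is uniform: for every 1 ≤ k ≤ n and nonnegative integers x_1, ..., x_n with x_1 + ... + x_n = n − k, the terminal state of the grabbing particle system started with n particles, particle i bearing x_i arms, is uniformly distributed on Φ(x_1,...,x_n), the set of planar forests of k rooted trees on n labeled vertices with n − k labeled edges in which vertex i has out-degree x_i for each i. -/

import Mathlib

open scoped ENNReal
open Classical

/-! ### The grabbing particle system

`n` particles are labeled by `Fin n`; particle `i` carries `x i` arms.  The arms are enumerated
uniformly at random and activated in that order; an activated arm grabs a particle chosen
uniformly at random among the particles that have not been grabbed yet and do not belong to the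
cluster of the arm's owner; the grabbed particle becomes the right-end of the new directed
edge.  Particles initially lie on the horizontal axis in a uniformly random order. -/

/-- The arms: arm `a` of particle `i`. -/
def ArmIdx (n : ℕ) (x : Fin n → ℕ) : Type := Σ i : Fin n, Fin (x i)

instance (n : ℕ) (x : Fin n → ℕ) : Fintype (ArmIdx n x) := by unfold ArmIdx; infer_instance
instance (n : ℕ) (x : Fin n → ℕ) : DecidableEq (ArmIdx n x) := by unfold ArmIdx; infer_instance

/-- Total number of arms. -/
def NArms (n : ℕ) (x : Fin n → ℕ) : ℕ := ∑ i, x i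

instance (n : ℕ) (x : Fin n → ℕ) : Nonempty (Fin (NArms n x) ≃ ArmIdx n x) :=
  ⟨Fintype.equivOfCardEq (by rw [Fintype.card_fin, NArms]; simp [ArmIdx])⟩

/-- One step towards the root of the cluster of `v`, given the arm enumeration `e` and the
sequence `g` of particles grabbed by the first `t` arms: the owner of the arm that grabbed `v`,
or `v` itself if `v` has not been grabbed. -/
noncomputable def parentStep {n : ℕ} {x : Fin n → ℕ} (e : Fin (NArms n x) ≃ ArmIdx n x)
    {t : ℕ} (ht : t ≤ NArms n x) (g : Fin t → Fin n) (v : Fin n) : Fin n :=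
  if h : ∃ s : Fin t, g s = v then (e (Fin.castLE ht h.choose)).1 else v

/-- The root of the cluster currently containing `v` (obtained by iterating `parentStep`
`n` times, which suffices since clusters have at most `n` particles). -/
noncomputable def clusterRoot {n : ℕ} {x : Fin n → ℕ} (e : Fin (NArms n x) ≃ ArmIdx n x)
    {t : ℕ} (ht : t ≤ NArms n x) (g : Fin t → Fin n) (v : Fin n) : Fin n :=
  (parentStep e ht g)^[n] v

/-- Running the grabbing dynamics from time `t` onwards, given the arm enumeration `e` and the
grabs made so far: at each step the active arm grabs a uniformly chosen particle among those
not yet grabbed and not in the cluster of the arm's owner.  (If no particle is available —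
which never happens along the actual dynamics — a dummy transition is made.)  The result is
the law of the full sequence of grabbed particles. -/
noncomputable def runGrab {n : ℕ} (x : Fin n → ℕ) (e : Fin (NArms n x) ≃ ArmIdx n x) :
    (t : ℕ) → (ht : t ≤ NArms n x) → (Fin t → Fin n) → PMF (Fin (NArms n x) → Fin n) :=
  fun t ht g =>
    if h : t < NArms n x then
      let owner : Fin n := (e ⟨t, h⟩).1
      let S : Finset (Fin n) := Finset.univ.filter fun v =>
        (∀ s : Fin t, g s ≠ v) ∧ clusterRoot e ht g owner ≠ v
      if hS : S.Nonempty then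
        (PMF.uniformOfFinset S hS).bind fun v => runGrab x e (t + 1) h (Fin.snoc g v)
      else runGrab x e (t + 1) h (Fin.snoc g owner)
    else
      PMF.pure fun s => g (Fin.cast (by omega) s)
termination_by t _ _ => NArms n x - t

/-- The state space recording the randomness of the grabbing particle system with arm counts
`x` : the (uniform) enumeration of the arms, the sequence of grabbed particles (the `t`-th
activated arm, which is also the edge labeled `t`, points from its owner to the particle
`g t`), and the (uniform) initial ordering of the particles on the axis. -/
def SysSt (n : ℕ) (x : Fin n → ℕ) : Type :=
  (Fin (NArms n x) ≃ ArmIdx n x) × (Fin (NArms n x) → Fin n) × Equiv.Perm (Fin n)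

/-- The law of the terminal state of the grabbing particle system with arm counts `x`. -/
noncomputable def sysLaw (n : ℕ) (x : Fin n → ℕ) : PMF (SysSt n x) :=
  (PMF.uniformOfFintype (Fin (NArms n x) ≃ ArmIdx n x)).bind fun e =>
    (PMF.uniformOfFintype (Equiv.Perm (Fin n))).bind fun π =>
      (runGrab x e 0 (Nat.zero_le _) (fun s => s.elim0)).map fun g => (e, g, π)

/-- An element of `Φ(x₁, …, xₙ)`: a planar forest of `k` rooted trees (ordered from left to
right) on `n` labeled vertices with `n - k` labeled edges, in which vertex `i` has out-degree
`x i`.  The edge labeled `t` goes from the owner of the arm `armEnum t` (using the arm slot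
`(armEnum t).2`, which gives the planar order of the children) to the vertex `grab t`; each
vertex is grabbed at most once and the structure is acyclic, so it is a forest; `rootOrder`
is the left-to-right order of the roots (the vertices that are not grabbed). -/
structure GPConfig (n k : ℕ) (x : Fin n → ℕ) : Type where
  armEnum : Fin (NArms n x) ≃ ArmIdx n x
  grab : Fin (NArms n x) → Fin n
  grab_inj : Function.Injective grab
  acyclic : ∃ d : Fin n → ℕ, ∀ t, d (grab t) = d (armEnum t).1 + 1
  rootOrder : Fin k ≃ {v : Fin n // ∀ t, grab t ≠ v}

/-- The event that the terminal state of the grabbing particle system realizes the planar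
forest `c` : the arm enumeration and the grabs match, and the initial ordering `π` of the
particles puts the roots in the left-to-right order prescribed by `c.rootOrder` (the `j`-th
root has exactly `j` roots to its left). -/
def realizes {n k : ℕ} {x : Fin n → ℕ} (c : GPConfig n k x) (s : SysSt n x) : Prop :=
  s.1 = c.armEnum ∧ s.2.1 = c.grab ∧
    ∀ j : Fin k,
      (Finset.univ.filter fun v : Fin n =>
        (∀ t, c.grab t ≠ v) ∧ s.2.2 v < s.2.2 (c.rootOrder j).1).card = (j : ℕ)


section
variable {n : ℕ} {x : Fin n → ℕ} (e : Fin (NArms n x) ≃ ArmIdx n x)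

/-- Partial validity of a grab sequence. -/
def Good {t : ℕ} (ht : t ≤ NArms n x) (g : Fin t → Fin n) : Prop :=
  Function.Injective g ∧
    ∃ d : Fin n → ℕ, ∀ s : Fin t, d (g s) = d ((e (Fin.castLE ht s)).1) + 1

variable {e}

lemma parentStep_of_not_grabbed {t : ℕ} {ht : t ≤ NArms n x} {g : Fin t → Fin n} {v : Fin n}
    (hv : ∀ s, g s ≠ v) : parentStep e ht g v = v := by
  rw [parentStep, dif_neg]; push_neg; exact hv

lemma parentStep_grab {t : ℕ} {ht : t ≤ NArms n x} {g : Fin t → Fin n}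
    (hg : Function.Injective g) (s : Fin t) :
    parentStep e ht g (g s) = (e (Fin.castLE ht s)).1 := by
  have h : ∃ s' : Fin t, g s' = g s := ⟨s, rfl⟩
  rw [parentStep, dif_pos h]
  congr 2
  exact congrArg _ (hg h.choose_spec)

lemma exists_iterate_not_grabbed {t : ℕ} {ht : t ≤ NArms n x} {g : Fin t → Fin n}
    (hg : Good e ht g) (v : Fin n) :
    ∃ i ≤ n, ∀ s, g s ≠ (parentStep e ht g)^[i] v := by
  by_contra hc
  push_neg at hc
  obtain ⟨hinj, d, hd⟩ := hg
  have key : ∀ i ≤ n, d ((parentStep e ht g)^[i] v) + i = d v := by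
    intro i hi
    induction i with
    | zero => simp
    | succ j ih =>
      obtain ⟨s, hs⟩ := hc j (by omega)
      have h1 : (parentStep e ht g)^[j+1] v = (e (Fin.castLE ht s)).1 := by
        rw [Function.iterate_succ_apply', ← hs, parentStep_grab hinj]
      have := hd s
      rw [hs] at this
      rw [h1]
      have := ih (by omega)
      omega
  have hinj2 : Function.Injective (fun i : Fin (n+1) => (parentStep e ht g)^[i] v) := by
    intro i j hij
    have h1 := key i (by omega)
    have h2 := key j (by omega)
    simp only at hij
    rw [hij] at h1
    exact Fin.ext (by omega)
  have := Fintype.card_le_of_injective _ hinj2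
  simp at this

lemma clusterRoot_not_grabbed {t : ℕ} {ht : t ≤ NArms n x} {g : Fin t → Fin n}
    (hg : Good e ht g) (v : Fin n) :
    ∀ s, g s ≠ clusterRoot e ht g v := by
  obtain ⟨i, hi, hfix⟩ := exists_iterate_not_grabbed hg v
  have heq : clusterRoot e ht g v = (parentStep e ht g)^[i] v := by
    have h2 : (parentStep e ht g)^[n] v
        = (parentStep e ht g)^[n-i] ((parentStep e ht g)^[i] v) := by
      rw [← Function.iterate_add_apply]; congr 1; omega
    rw [clusterRoot, h2]
    exact Function.iterate_fixed (parentStep_of_not_grabbed hfix) _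
  rw [heq]; exact hfix

lemma clusterRoot_of_not_grabbed {t : ℕ} {ht : t ≤ NArms n x} {g : Fin t → Fin n} {v : Fin n}
    (hv : ∀ s, g s ≠ v) : clusterRoot e ht g v = v :=
  Function.iterate_fixed (parentStep_of_not_grabbed hv) _

lemma clusterRoot_parentStep {t : ℕ} {ht : t ≤ NArms n x} {g : Fin t → Fin n}
    (hg : Good e ht g) (v : Fin n) :
    clusterRoot e ht g (parentStep e ht g v) = clusterRoot e ht g v := by
  rw [clusterRoot, ← Function.iterate_succ_apply, Function.iterate_succ_apply']
  exact parentStep_of_not_grabbed (clusterRoot_not_grabbed hg v)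

lemma clusterRoot_grab {t : ℕ} {ht : t ≤ NArms n x} {g : Fin t → Fin n}
    (hg : Good e ht g) (s : Fin t) :
    clusterRoot e ht g ((e (Fin.castLE ht s)).1) = clusterRoot e ht g (g s) := by
  rw [← parentStep_grab hg.1 s, clusterRoot_parentStep hg]

lemma d_parentStep_le {t : ℕ} {ht : t ≤ NArms n x} {g : Fin t → Fin n}
    (hinj : Function.Injective g) {d : Fin n → ℕ}
    (hd : ∀ s : Fin t, d (g s) = d ((e (Fin.castLE ht s)).1) + 1) (v : Fin n) :
    d (parentStep e ht g v) ≤ d v := by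
  by_cases h : ∃ s, g s = v
  · obtain ⟨s, hs⟩ := h
    rw [← hs, parentStep_grab hinj]
    have := hd s; omega
  · push_neg at h
    rw [parentStep_of_not_grabbed h]

lemma d_clusterRoot_le {t : ℕ} {ht : t ≤ NArms n x} {g : Fin t → Fin n}
    (hinj : Function.Injective g) {d : Fin n → ℕ}
    (hd : ∀ s : Fin t, d (g s) = d ((e (Fin.castLE ht s)).1) + 1) (v : Fin n) :
    d (clusterRoot e ht g v) ≤ d v := by
  have key : ∀ (j : ℕ) (v : Fin n), d ((parentStep e ht g)^[j] v) ≤ d v := by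
    intro j
    induction j with
    | zero => simp
    | succ i ih =>
      intro v
      rw [Function.iterate_succ_apply]
      exact le_trans (ih _) (d_parentStep_le hinj hd v)
  exact key n v

lemma card_not_grabbed {t : ℕ} {g : Fin t → Fin n} (hinj : Function.Injective g) :
    (Finset.univ.filter fun v => ∀ s, g s ≠ v).card = n - t := by
  have heq : (Finset.univ.filter fun v => ∀ s, g s ≠ v)
      = Finset.univ \ Finset.univ.image g := by
    ext v
    simp [eq_comm]
  rw [heq, Finset.card_sdiff_of_subset (Finset.subset_univ _), Finset.card_image_of_injective _ hinj]
  simp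

lemma avail_eq {t : ℕ} {ht : t ≤ NArms n x} {g : Fin t → Fin n} (hg : Good e ht g)
    (w : Fin n) :
    (Finset.univ.filter fun v => (∀ s, g s ≠ v) ∧ clusterRoot e ht g w ≠ v)
      = (Finset.univ.filter fun v => ∀ s, g s ≠ v).erase (clusterRoot e ht g w) := by
  ext v
  simp only [Finset.mem_filter, Finset.mem_erase, Finset.mem_univ, true_and]
  tauto

lemma card_avail {t : ℕ} {ht : t ≤ NArms n x} {g : Fin t → Fin n} (hg : Good e ht g)
    (w : Fin n) :
    (Finset.univ.filter fun v => (∀ s, g s ≠ v) ∧ clusterRoot e ht g w ≠ v).card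
      = n - t - 1 := by
  rw [avail_eq hg w, Finset.card_erase_of_mem, card_not_grabbed hg.1]
  simp only [Finset.mem_filter, Finset.mem_univ, true_and]
  exact clusterRoot_not_grabbed hg w

lemma snoc_injective {t : ℕ} {g : Fin t → Fin n} {v : Fin n}
    (hinj : Function.Injective g) (hv : ∀ s, g s ≠ v) :
    Function.Injective (Fin.snoc g v : Fin (t+1) → Fin n) := by
  intro a b hab
  induction a using Fin.lastCases with
  | last =>
    induction b using Fin.lastCases with
    | last => rfl
    | cast b' =>
      rw [Fin.snoc_last, Fin.snoc_castSucc] at hab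
      exact absurd hab.symm (hv b')
  | cast a' =>
    induction b using Fin.lastCases with
    | last =>
      rw [Fin.snoc_last, Fin.snoc_castSucc] at hab
      exact absurd hab (hv a')
    | cast b' =>
      rw [Fin.snoc_castSucc, Fin.snoc_castSucc] at hab
      rw [hinj hab]

lemma good_snoc {t : ℕ} {h : t < NArms n x} {g : Fin t → Fin n} {v : Fin n}
    (hg : Good e (Nat.le_of_lt h) g) (hv : ∀ s, g s ≠ v)
    (hroot : clusterRoot e (Nat.le_of_lt h) g ((e ⟨t, h⟩).1) ≠ v) :
    Good e h (Fin.snoc g v) := by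
  obtain ⟨hinj, d, hd⟩ := hg
  have hg' : Good e (Nat.le_of_lt h) g := ⟨hinj, d, hd⟩
  refine ⟨snoc_injective hinj hv, ?_⟩
  set ow : Fin n := (e ⟨t, h⟩).1 with how
  refine ⟨fun w => if clusterRoot e (Nat.le_of_lt h) g w = v then d w - d v + (d ow + 1)
    else d w, ?_⟩
  intro s
  induction s using Fin.lastCases with
  | last =>
    have hc1 : Fin.castLE h (Fin.last t) = (⟨t, h⟩ : Fin (NArms n x)) := rfl
    rw [Fin.snoc_last, hc1]
    dsimp only
    rw [if_pos (clusterRoot_of_not_grabbed hv), if_neg hroot, ← how]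
    omega
  | cast s =>
    have hc2 : Fin.castLE h (Fin.castSucc s) = Fin.castLE (Nat.le_of_lt h) s := rfl
    rw [Fin.snoc_castSucc, hc2]
    set u : Fin n := (e (Fin.castLE (Nat.le_of_lt h) s)).1 with hu
    have hred : clusterRoot e (Nat.le_of_lt h) g u = clusterRoot e (Nat.le_of_lt h) g (g s) :=
      clusterRoot_grab hg' s
    dsimp only
    by_cases hcase : clusterRoot e (Nat.le_of_lt h) g (g s) = v
    · rw [if_pos hcase, if_pos (hred.trans hcase)]
      have h1 : d (clusterRoot e (Nat.le_of_lt h) g u) ≤ d u := d_clusterRoot_le hinj hd u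
      rw [hred, hcase] at h1
      have h2 := hd s
      rw [← hu] at h2
      omega
    · rw [if_neg hcase, if_neg (fun hh => hcase (hred ▸ hh))]
      exact hd s

lemma mem_avail_of_good_snoc {t : ℕ} {h : t < NArms n x} {g : Fin t → Fin n} {v : Fin n}
    (hg : Good e (Nat.le_of_lt h) g) (hgood : Good e h (Fin.snoc g v)) :
    (∀ s, g s ≠ v) ∧ clusterRoot e (Nat.le_of_lt h) g ((e ⟨t, h⟩).1) ≠ v := by
  have hv : ∀ s, g s ≠ v := by
    intro s hs
    have : (Fin.snoc g v : Fin (t+1) → Fin n) (Fin.castSucc s)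
        = (Fin.snoc g v : Fin (t+1) → Fin n) (Fin.last t) := by
      rw [Fin.snoc_castSucc, Fin.snoc_last, hs]
    have := hgood.1 this
    exact absurd (congrArg Fin.val this) (by simp; omega)
  refine ⟨hv, ?_⟩
  intro hroot
  obtain ⟨hinj', d', hd'⟩ := hgood
  have hstep : ∀ w, d' (parentStep e (Nat.le_of_lt h) g w) ≤ d' w := by
    intro w
    by_cases hw : ∃ s, g s = w
    · obtain ⟨s, hs⟩ := hw
      rw [← hs, parentStep_grab hg.1]
      have h2 := hd' (Fin.castSucc s)
      rw [Fin.snoc_castSucc] at h2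
      have hc2 : Fin.castLE h (Fin.castSucc s) = Fin.castLE (Nat.le_of_lt h) s := rfl
      rw [hc2] at h2
      omega
    · push_neg at hw
      rw [parentStep_of_not_grabbed hw]
  have hiter : ∀ j w, d' ((parentStep e (Nat.le_of_lt h) g)^[j] w) ≤ d' w := by
    intro j
    induction j with
    | zero => simp
    | succ i ih =>
      intro w
      rw [Function.iterate_succ_apply]
      exact le_trans (ih _) (hstep w)
  have h1 : d' (clusterRoot e (Nat.le_of_lt h) g ((e ⟨t, h⟩).1)) ≤ d' ((e ⟨t, h⟩).1) :=
    hiter n _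
  rw [hroot] at h1
  have h2 := hd' (Fin.last t)
  rw [Fin.snoc_last] at h2
  have hc1 : Fin.castLE h (Fin.last t) = (⟨t, h⟩ : Fin (NArms n x)) := rfl
  rw [hc1] at h2
  omega

lemma runGrab_eq_of_ge (t : ℕ) (ht : t ≤ NArms n x) (hge : ¬ t < NArms n x)
    (g : Fin t → Fin n) :
    runGrab x e t ht g = PMF.pure (fun s => g (Fin.cast (by omega) s)) := by
  rw [runGrab, dif_neg hge]

lemma runGrab_support_extends : ∀ (fuel t : ℕ) (ht : t ≤ NArms n x) (g : Fin t → Fin n)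
    (f : Fin (NArms n x) → Fin n), NArms n x - t = fuel → runGrab x e t ht g f ≠ 0 →
    ∀ s : Fin t, f (Fin.castLE ht s) = g s := by
  intro fuel
  induction fuel with
  | zero =>
    intro t ht g f hfuel hf
    have hge : ¬ t < NArms n x := by omega
    rw [runGrab_eq_of_ge t ht hge, PMF.pure_apply] at hf
    split at hf
    · subst f
      intro s
      rfl
    · exact absurd rfl hf
  | succ fuel ih =>
    intro t ht g f hfuel hf
    have h : t < NArms n x := by omega
    rw [runGrab, dif_pos h] at hf
    intro s
    have key : ∀ v : Fin n, runGrab x e (t+1) h (Fin.snoc g v) f ≠ 0 →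
        f (Fin.castLE ht s) = g s := by
      intro v hv
      have := ih (t+1) h (Fin.snoc g v) f (by omega) hv (Fin.castSucc s)
      rwa [Fin.snoc_castSucc] at this
    dsimp only at hf
    split at hf
    · rw [PMF.bind_apply] at hf
      simp only [ne_eq, ENNReal.tsum_eq_zero, not_forall] at hf
      obtain ⟨v, hv⟩ := hf
      exact key v fun hz => hv (by rw [hz, mul_zero])
    · exact key _ hf

lemma good_castLE {t t' : ℕ} (h1 : t ≤ t') {ht' : t' ≤ NArms n x} {g : Fin t' → Fin n}
    (hg : Good e ht' g) : Good e (le_trans h1 ht') (fun s => g (Fin.castLE h1 s)) := by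
  obtain ⟨hinj, d, hd⟩ := hg
  refine ⟨fun a b hab => Fin.castLE_injective h1 (hinj hab), d, fun s => hd (Fin.castLE h1 s)⟩

lemma snoc_castLE {t : ℕ} (h : t < NArms n x) (f : Fin (NArms n x) → Fin n) :
    (Fin.snoc (fun s : Fin t => f (Fin.castLE (Nat.le_of_lt h) s)) (f ⟨t, h⟩) :
      Fin (t+1) → Fin n) = fun s => f (Fin.castLE h s) := by
  funext s
  induction s using Fin.lastCases with
  | last => rw [Fin.snoc_last]; rfl
  | cast s' => rw [Fin.snoc_castSucc]; exact congrArg f (Fin.ext (by simp))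

lemma runGrab_apply (hm : NArms n x < n) :
    ∀ (fuel t : ℕ) (ht : t ≤ NArms n x) (f : Fin (NArms n x) → Fin n),
    NArms n x - t = fuel →
    Good e (le_refl _) f →
    runGrab x e t ht (fun s => f (Fin.castLE ht s)) f
      = ∏ i ∈ Finset.Ico t (NArms n x), (((n - i - 1 : ℕ) : ℝ≥0∞))⁻¹ := by
  intro fuel
  induction fuel with
  | zero =>
    intro t ht f hfuel hf
    have hge : ¬ t < NArms n x := by omega
    rw [runGrab_eq_of_ge t ht hge, PMF.pure_apply, if_pos (by funext s; rfl),
      Finset.Ico_eq_empty (by omega), Finset.prod_empty]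
  | succ fuel ih =>
    intro t ht f hfuel hf
    have h : t < NArms n x := by omega
    have hgood : Good e ht (fun s : Fin t => f (Fin.castLE ht s)) := good_castLE ht hf
    have hcard : (Finset.univ.filter fun v : Fin n =>
        (∀ s : Fin t, (fun s : Fin t => f (Fin.castLE ht s)) s ≠ v) ∧
          clusterRoot e ht (fun s : Fin t => f (Fin.castLE ht s)) ((e ⟨t, h⟩).1) ≠ v).card
        = n - t - 1 := card_avail hgood _
    have hS : (Finset.univ.filter fun v : Fin n =>
        (∀ s : Fin t, (fun s : Fin t => f (Fin.castLE ht s)) s ≠ v) ∧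
          clusterRoot e ht (fun s : Fin t => f (Fin.castLE ht s)) ((e ⟨t, h⟩).1) ≠ v).Nonempty := by
      rw [← Finset.card_pos, hcard]; omega
    rw [runGrab, dif_pos h]
    dsimp only
    rw [dif_pos hS, PMF.bind_apply]
    have hgood' : Good e h (fun s : Fin (t+1) => f (Fin.castLE h s)) := good_castLE h hf
    rw [← snoc_castLE h f] at hgood'
    set v0 : Fin n := f ⟨t, h⟩ with hv0
    have hmem := mem_avail_of_good_snoc hgood hgood'
    have hterm : ∀ v : Fin n, v ≠ v0 →
        (PMF.uniformOfFinset _ hS) v *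
          runGrab x e (t+1) h (Fin.snoc (fun s : Fin t => f (Fin.castLE ht s)) v) f = 0 := by
      intro v hv
      have hz : runGrab x e (t+1) h (Fin.snoc (fun s : Fin t => f (Fin.castLE ht s)) v) f
          = 0 := by
        by_contra hnz
        have := runGrab_support_extends (NArms n x - (t+1)) (t+1) h _ f rfl hnz (Fin.last t)
        rw [Fin.snoc_last] at this
        exact hv (by rw [← this]; rfl)
      rw [hz, mul_zero]
    rw [tsum_eq_single v0 hterm]
    have hv0mem : v0 ∈ (Finset.univ.filter fun v : Fin n =>
        (∀ s : Fin t, (fun s : Fin t => f (Fin.castLE ht s)) s ≠ v) ∧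
          clusterRoot e ht (fun s : Fin t => f (Fin.castLE ht s)) ((e ⟨t, h⟩).1) ≠ v) := by
      rw [Finset.mem_filter]
      exact ⟨Finset.mem_univ _, hmem⟩
    rw [PMF.uniformOfFinset_apply, if_pos hv0mem, hcard]
    rw [show (Fin.snoc (fun s : Fin t => f (Fin.castLE ht s)) v0 : Fin (t+1) → Fin n)
      = fun s => f (Fin.castLE h s) from snoc_castLE h f]
    rw [ih (t+1) h f (by omega) hf]
    rw [Finset.prod_eq_prod_Ico_succ_bot h]

lemma card_good_ext :
    ∀ (fuel t : ℕ) (ht : t ≤ NArms n x) (g : Fin t → Fin n), NArms n x - t = fuel →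
    Good e ht g →
    (Finset.univ.filter fun f : Fin (NArms n x) → Fin n =>
        Good e (le_refl _) f ∧ ∀ s : Fin t, f (Fin.castLE ht s) = g s).card
      = ∏ i ∈ Finset.Ico t (NArms n x), (n - i - 1) := by
  intro fuel
  induction fuel with
  | zero =>
    intro t ht g hfuel hg
    have htm : t = NArms n x := by omega
    subst htm
    have heq : (Finset.univ.filter fun f : Fin (NArms n x) → Fin n =>
        Good e (le_refl _) f ∧ ∀ s, f (Fin.castLE ht s) = g s) = {g} := by
      ext f
      simp only [Finset.mem_filter, Finset.mem_univ, true_and, Finset.mem_singleton]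
      constructor
      · rintro ⟨-, hext⟩
        funext s
        have := hext s
        rwa [show Fin.castLE ht s = s from Fin.ext rfl] at this
      · rintro rfl
        refine ⟨⟨hg.1, ?_⟩, fun s => by rw [show Fin.castLE ht s = s from Fin.ext rfl]⟩
        obtain ⟨-, d, hd⟩ := hg
        exact ⟨d, fun s => hd s⟩
    rw [heq, Finset.card_singleton, Finset.Ico_self, Finset.prod_empty]
  | succ fuel ih =>
    intro t ht g hfuel hg
    have h : t < NArms n x := by omega
    set S := (Finset.univ.filter fun v : Fin n =>
        (∀ s : Fin t, g s ≠ v) ∧ clusterRoot e ht g ((e ⟨t, h⟩).1) ≠ v) with hSdef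
    have hbi : (Finset.univ.filter fun f : Fin (NArms n x) → Fin n =>
        Good e (le_refl _) f ∧ ∀ s : Fin t, f (Fin.castLE ht s) = g s)
        = S.biUnion (fun v => Finset.univ.filter fun f : Fin (NArms n x) → Fin n =>
            Good e (le_refl _) f ∧
              ∀ s : Fin (t+1), f (Fin.castLE h s) = (Fin.snoc g v : Fin (t+1) → Fin n) s) := by
      ext f
      simp only [Finset.mem_biUnion, Finset.mem_filter, Finset.mem_univ, true_and]
      constructor
      · rintro ⟨hf, hext⟩
        refine ⟨f ⟨t, h⟩, ?_, hf, ?_⟩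
        · have hpeq : (Fin.snoc g (f ⟨t, h⟩) : Fin (t+1) → Fin n)
              = fun s => f (Fin.castLE h s) := by
            have hgg : g = fun s : Fin t => f (Fin.castLE (Nat.le_of_lt h) s) := by
              funext s; exact (hext s).symm
            rw [← snoc_castLE h f, hgg]
          have hgood' : Good e h (Fin.snoc g (f ⟨t, h⟩)) := by
            rw [hpeq]; exact good_castLE h hf
          have := mem_avail_of_good_snoc hg hgood'
          rw [hSdef, Finset.mem_filter]
          exact ⟨Finset.mem_univ _, this⟩
        · intro s
          induction s using Fin.lastCases with
          | last => rw [Fin.snoc_last]; rfl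
          | cast s' =>
            rw [Fin.snoc_castSucc, show Fin.castLE h (Fin.castSucc s')
              = Fin.castLE ht s' from rfl]
            exact hext s'
      · rintro ⟨v, hv, hf, hext⟩
        refine ⟨hf, fun s => ?_⟩
        have := hext (Fin.castSucc s)
        rwa [Fin.snoc_castSucc, show Fin.castLE h (Fin.castSucc s)
          = Fin.castLE ht s from rfl] at this
    rw [hbi, Finset.card_biUnion]
    · have hconst : ∀ v ∈ S, (Finset.univ.filter fun f : Fin (NArms n x) → Fin n =>
          Good e (le_refl _) f ∧
            ∀ s : Fin (t+1), f (Fin.castLE h s) = (Fin.snoc g v : Fin (t+1) → Fin n) s).card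
          = ∏ i ∈ Finset.Ico (t+1) (NArms n x), (n - i - 1) := by
        intro v hv
        rw [hSdef, Finset.mem_filter] at hv
        exact ih (t+1) h (Fin.snoc g v) (by omega) (good_snoc hg hv.2.1 hv.2.2)
      rw [Finset.sum_congr rfl hconst, Finset.sum_const, hSdef, card_avail hg,
        Finset.prod_eq_prod_Ico_succ_bot h, smul_eq_mul]
    · intro a ha b hb hab
      simp only [Finset.disjoint_left, Finset.mem_filter, Finset.mem_univ, true_and]
      rintro f ⟨-, hfa⟩ ⟨-, hfb⟩
      have h1 := hfa (Fin.last t)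
      have h2 := hfb (Fin.last t)
      rw [Fin.snoc_last] at h1 h2
      exact hab (h1 ▸ h2 ▸ rfl)

end

section PermCount

variable {N K : ℕ} (p : Fin N → Prop) (r : Fin K ≃ {v : Fin N // p v})

/-- rank of the `j`-th root under `ψ`. -/
private noncomputable def rnk (ψ : Equiv.Perm (Fin N)) (j : Fin K) : ℕ :=
  (Finset.univ.filter fun v : Fin N => p v ∧ ψ v < ψ (r j).1).card

private lemma rnk_lt (hcard : (Finset.univ.filter fun v => p v).card = K) (ψ : Equiv.Perm (Fin N)) (j : Fin K) : rnk p r ψ j < K := by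
  have hsub : (Finset.univ.filter fun v : Fin N => p v ∧ ψ v < ψ (r j).1)
      ⊆ (Finset.univ.filter fun v : Fin N => p v).erase (r j).1 := by
    intro v hv
    rw [Finset.mem_filter] at hv
    rw [Finset.mem_erase, Finset.mem_filter]
    exact ⟨fun hvr => absurd (hvr ▸ hv.2.2) (lt_irrefl _), Finset.mem_univ _, hv.2.1⟩
  have h2 := Finset.card_le_card hsub
  rw [Finset.card_erase_of_mem (by rw [Finset.mem_filter]; exact ⟨Finset.mem_univ _, (r j).2⟩),
    hcard] at h2
  have : 0 < K := Fin.pos j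
  unfold rnk
  omega

private lemma rnk_injective (ψ : Equiv.Perm (Fin N)) {i j : Fin K}
    (hij : rnk p r ψ i = rnk p r ψ j) : i = j := by
  have key : ∀ a b : Fin K, ψ (r a).1 < ψ (r b).1 → rnk p r ψ a < rnk p r ψ b := by
    intro a b hab
    have hsub : (Finset.univ.filter fun v : Fin N => p v ∧ ψ v < ψ (r a).1)
        ⊆ (Finset.univ.filter fun v : Fin N => p v ∧ ψ v < ψ (r b).1) := by
      intro v hv
      rw [Finset.mem_filter] at hv ⊢
      exact ⟨Finset.mem_univ _, hv.2.1, lt_trans hv.2.2 hab⟩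
    refine Finset.card_lt_card ((Finset.ssubset_iff_of_subset hsub).mpr
      ⟨(r a).1, ?_, ?_⟩)
    · rw [Finset.mem_filter]
      exact ⟨Finset.mem_univ _, (r a).2, hab⟩
    · intro hmem
      rw [Finset.mem_filter] at hmem
      exact lt_irrefl _ hmem.2.2
  rcases lt_trichotomy (ψ ((r i) : Fin N)) (ψ ((r j) : Fin N)) with hlt | heq | hgt
  · exact absurd hij (key _ _ hlt).ne
  · exact r.injective (Subtype.ext (ψ.injective heq))
  · exact absurd hij.symm (key _ _ hgt).ne

private lemma rnk_mul (ψ : Equiv.Perm (Fin N)) (τ : Equiv.Perm (Fin K)) (j : Fin K) :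
    rnk p r (ψ * τ.extendDomain r) j = rnk p r ψ (τ j) := by
  unfold rnk
  apply Finset.card_bij' (fun v _ => τ.extendDomain r v)
    (fun w _ => (τ.extendDomain r)⁻¹ w)
  · intro v hv
    rw [Finset.mem_filter] at hv ⊢
    obtain ⟨-, hpv, hlt⟩ := hv
    have h1 : τ.extendDomain r v = ((r (τ (r.symm ⟨v, hpv⟩))) : Fin N) := by
      have := Equiv.Perm.extendDomain_apply_image τ r (r.symm ⟨v, hpv⟩)
      rwa [Equiv.apply_symm_apply] at this
    refine ⟨Finset.mem_univ _, by rw [h1]; exact (r _).2, ?_⟩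
    have h2 : τ.extendDomain r (r j).1 = ((r (τ j)) : Fin N) :=
      Equiv.Perm.extendDomain_apply_image τ r j
    rw [Equiv.Perm.mul_apply, Equiv.Perm.mul_apply, h2] at hlt
    exact hlt
  · intro w hw
    rw [Finset.mem_filter] at hw ⊢
    obtain ⟨-, hpw, hlt⟩ := hw
    have h1 : (τ.extendDomain r)⁻¹ w = ((r (τ⁻¹ (r.symm ⟨w, hpw⟩))) : Fin N) := by
      rw [Equiv.Perm.extendDomain_inv]
      have := Equiv.Perm.extendDomain_apply_image τ⁻¹ r (r.symm ⟨w, hpw⟩)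
      rwa [Equiv.apply_symm_apply] at this
    refine ⟨Finset.mem_univ _, by rw [h1]; exact (r _).2, ?_⟩
    rw [Equiv.Perm.mul_apply, Equiv.Perm.mul_apply]
    rw [show τ.extendDomain r ((τ.extendDomain r)⁻¹ w) = w from Equiv.apply_symm_apply _ _]
    have h2 : τ.extendDomain r (r j).1 = ((r (τ j)) : Fin N) :=
      Equiv.Perm.extendDomain_apply_image τ r j
    rw [h2]
    exact hlt
  · intro v _; exact Equiv.symm_apply_apply _ _
  · intro w _; exact Equiv.apply_symm_apply _ _

private lemma card_perm_rank (hcard0 : Nat.card {v : Fin N // p v} = K) :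
    Nat.card {π : Equiv.Perm (Fin N) // ∀ j : Fin K, rnk p r π j = (j : ℕ)} * K.factorial
      = Fintype.card (Equiv.Perm (Fin N)) := by
  classical
  have hcard : (Finset.univ.filter fun v => p v).card = K := by
    rw [← hcard0, Nat.card_eq_fintype_card, Fintype.card_subtype]
  set Cond : Equiv.Perm (Fin N) → Prop := fun π => ∀ j : Fin K, rnk p r π j = (j : ℕ)
    with hCond
  have hrho : ∀ ψ : Equiv.Perm (Fin N), ∃ τ : Equiv.Perm (Fin K),
      ∀ j, (τ j : ℕ) = rnk p r ψ j := by
    intro ψ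
    have hinj : Function.Injective (fun j : Fin K => (⟨rnk p r ψ j, rnk_lt p r hcard ψ j⟩ :
        Fin K)) := by
      intro a b hab
      exact rnk_injective p r ψ (congrArg Fin.val hab)
    exact ⟨Equiv.ofBijective _ ((Finite.injective_iff_bijective).mp hinj),
      fun j => rfl⟩
  have key : Fintype.card ({π : Equiv.Perm (Fin N) // Cond π} × Equiv.Perm (Fin K))
      = Fintype.card (Equiv.Perm (Fin N)) := by
    apply Fintype.card_congr
    refine Equiv.ofBijective (fun q => q.1.1 * q.2.extendDomain r) ⟨?_, ?_⟩
    · rintro ⟨⟨π₁, hπ₁⟩, τ₁⟩ ⟨⟨π₂, hπ₂⟩, τ₂⟩ hq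
      simp only at hq
      have hτ : τ₁ = τ₂ := by
        apply Equiv.ext
        intro j
        have h1 : rnk p r (π₁ * τ₁.extendDomain r) j = (τ₁ j : ℕ) := by
          rw [rnk_mul]; exact hπ₁ (τ₁ j)
        have h2 : rnk p r (π₂ * τ₂.extendDomain r) j = (τ₂ j : ℕ) := by
          rw [rnk_mul]; exact hπ₂ (τ₂ j)
        rw [hq] at h1
        exact Fin.ext (h1.symm.trans h2)
      subst hτ
      have hπ : π₁ = π₂ := mul_right_cancel hq
      simp [hπ]
    · intro ψ
      obtain ⟨τ, hτ⟩ := hrho ψ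
      have hcnd : Cond (ψ * (τ.extendDomain r)⁻¹) := by
        intro j
        rw [Equiv.Perm.extendDomain_inv, rnk_mul, ← hτ (τ⁻¹ j), Equiv.Perm.inv_def, Equiv.apply_symm_apply]
      exact ⟨⟨⟨ψ * (τ.extendDomain r)⁻¹, hcnd⟩, τ⟩, inv_mul_cancel_right _ _⟩
  rw [Fintype.card_prod, Fintype.card_perm, Fintype.card_fin] at key
  rw [Nat.card_eq_fintype_card]
  exact key

end PermCount

section Assembly

lemma map_triple_apply {n : ℕ} {x : Fin n → ℕ} (p : PMF (Fin (NArms n x) → Fin n))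
    (e : Fin (NArms n x) ≃ ArmIdx n x) (π : Equiv.Perm (Fin n)) (s : SysSt n x) :
    (p.map fun g => ((e, g, π) : SysSt n x)) s
      = if s.1 = e ∧ s.2.2 = π then p s.2.1 else 0 := by
  obtain ⟨e0, g0, π0⟩ := s
  dsimp only
  rw [PMF.map_apply]
  by_cases hc : e0 = e ∧ π0 = π
  · obtain ⟨rfl, rfl⟩ := hc
    rw [if_pos ⟨rfl, rfl⟩, tsum_eq_single g0]
    · rw [if_pos rfl]
    · intro g hg
      rw [if_neg]
      intro hh
      exact hg (congrArg (fun z : SysSt n x => z.2.1) hh).symm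
  · rw [if_neg hc]
    apply ENNReal.tsum_eq_zero.mpr
    intro g
    rw [if_neg]
    intro hh
    exact hc ⟨congrArg Prod.fst hh, congrArg (fun z : SysSt n x => z.2.2) hh⟩

lemma sysLaw_apply {n : ℕ} {x : Fin n → ℕ} (s : SysSt n x) :
    sysLaw n x s
      = (↑(Fintype.card (Fin (NArms n x) ≃ ArmIdx n x)) : ℝ≥0∞)⁻¹ *
        ((↑(Fintype.card (Equiv.Perm (Fin n))) : ℝ≥0∞)⁻¹ *
          runGrab x s.1 0 (Nat.zero_le _) (fun t => t.elim0) s.2.1) := by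
  rw [sysLaw, PMF.bind_apply, tsum_eq_single s.1]
  · rw [PMF.uniformOfFintype_apply, PMF.bind_apply, tsum_eq_single s.2.2]
    · rw [PMF.uniformOfFintype_apply]
      erw [map_triple_apply]
      rw [if_pos ⟨rfl, rfl⟩]
    · intro π hπ
      erw [map_triple_apply]
      rw [if_neg (fun hh => hπ hh.2.symm), mul_zero]
  · intro e he
    have hz : ∀ π : Equiv.Perm (Fin n),
        (PMF.uniformOfFintype (Equiv.Perm (Fin n))) π *
          ((runGrab x e 0 (Nat.zero_le _) (fun t => t.elim0)).map
            fun g => ((e, g, π) : SysSt n x)) s = 0 := by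
      intro π
      erw [map_triple_apply]
      rw [if_neg (fun hh => he hh.1.symm), mul_zero]
    rw [PMF.bind_apply]
    convert mul_zero _ using 2
    apply ENNReal.tsum_eq_zero.mpr
    exact hz

lemma card_good_zero {n : ℕ} {x : Fin n → ℕ} (e : Fin (NArms n x) ≃ ArmIdx n x) :
    (Finset.univ.filter fun f : Fin (NArms n x) → Fin n => Good e (le_refl _) f).card
      = ∏ i ∈ Finset.Ico 0 (NArms n x), (n - i - 1) := by
  have h0 : Good e (Nat.zero_le (NArms n x)) (fun s : Fin 0 => s.elim0) :=
    ⟨fun a => a.elim0, fun _ => 0, fun s => s.elim0⟩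
  have := card_good_ext (NArms n x) 0 (Nat.zero_le _) (fun s : Fin 0 => s.elim0)
    (by omega) h0
  rw [← this]
  congr 1
  ext f
  simp only [Finset.mem_filter, Finset.mem_univ, true_and]
  exact ⟨fun h => ⟨h, fun s => s.elim0⟩, fun h => h.1⟩

lemma card_GPConfig (n k : ℕ) (hk : 1 ≤ k) (hkn : k ≤ n) (x : Fin n → ℕ)
    (hsum : ∑ i, x i = n - k) :
    Nat.card (GPConfig n k x)
      = Fintype.card (Fin (NArms n x) ≃ ArmIdx n x) *
        ((∏ i ∈ Finset.Ico 0 (NArms n x), (n - i - 1)) * k.factorial) := by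
  classical
  have hmval : NArms n x = n - k := hsum
  have Ψ : GPConfig n k x ≃
      Σ e : Fin (NArms n x) ≃ ArmIdx n x,
        Σ g : {g : Fin (NArms n x) → Fin n // Good e (le_refl _) g},
          (Fin k ≃ {v : Fin n // ∀ t, g.1 t ≠ v}) :=
    { toFun := fun c => ⟨c.armEnum, ⟨⟨c.grab, c.grab_inj, c.acyclic⟩, c.rootOrder⟩⟩
      invFun := fun q => ⟨q.1, q.2.1.1, q.2.1.2.1, q.2.1.2.2, q.2.2⟩
      left_inv := fun c => rfl
      right_inv := fun q => rfl }
  rw [Nat.card_congr Ψ, Nat.card_eq_fintype_card, Fintype.card_sigma]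
  have hterm : ∀ e : Fin (NArms n x) ≃ ArmIdx n x,
      Fintype.card (Σ g : {g : Fin (NArms n x) → Fin n // Good e (le_refl _) g},
          (Fin k ≃ {v : Fin n // ∀ t, g.1 t ≠ v}))
        = (∏ i ∈ Finset.Ico 0 (NArms n x), (n - i - 1)) * k.factorial := by
    intro e
    rw [Fintype.card_sigma]
    have hr : ∀ g : {g : Fin (NArms n x) → Fin n // Good e (le_refl _) g},
        Fintype.card (Fin k ≃ {v : Fin n // ∀ t, g.1 t ≠ v}) = k.factorial := by
      intro g
      have hcard : Fintype.card {v : Fin n // ∀ t, g.1 t ≠ v} = k := by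
        rw [Fintype.card_subtype, card_not_grabbed g.2.1]
        omega
      rw [Fintype.card_equiv (Fintype.equivOfCardEq (by rw [hcard, Fintype.card_fin]))]
      rw [Fintype.card_fin]
    rw [Finset.sum_congr rfl (fun g _ => hr g), Finset.sum_const, smul_eq_mul,
      Finset.card_univ, Fintype.card_subtype, card_good_zero e]
  rw [Finset.sum_congr rfl (fun e _ => hterm e), Finset.sum_const, smul_eq_mul,
    Finset.card_univ]

end Assembly

/-- For every `1 ≤ k ≤ n` and arm counts `x` with `∑ x = n - k`, the
terminal state of the grabbing particle system started with `n` particles, particle `i`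
bearing `x i` arms, is uniformly distributed on the set `Φ(x)` of planar forests of `k`
rooted trees on `n` labeled vertices with `n - k` labeled edges and out-degrees `x`. -/
theorem terminal_state_uniform
    (n k : ℕ) (hk : 1 ≤ k) (hkn : k ≤ n)
    (x : Fin n → ℕ) (hsum : ∑ i, x i = n - k) :
    ∀ c : GPConfig n k x,
      (∑' s : {s : SysSt n x // realizes c s}, sysLaw n x s.1)
        = ((Nat.card (GPConfig n k x) : ℝ≥0∞))⁻¹ := by

  intro c
  haveI : DecidableEq (SysSt n x) := by unfold SysSt; infer_instance
  haveI : Fintype (SysSt n x) := by unfold SysSt; infer_instance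
  classical
  have hmval : NArms n x = n - k := hsum
  have hmn : NArms n x < n := by omega
  have hgood : Good c.armEnum (le_refl (NArms n x)) c.grab := ⟨c.grab_inj, c.acyclic⟩
  have hrootcard : Nat.card {v : Fin n // ∀ t, c.grab t ≠ v} = k := by
    rw [Nat.card_eq_fintype_card, Fintype.card_subtype, card_not_grabbed c.grab_inj]; omega
  have hrnk : ∀ (π : Equiv.Perm (Fin n)) (j : Fin k),
      rnk (fun v : Fin n => ∀ t, c.grab t ≠ v) c.rootOrder π j
        = (Finset.univ.filter fun v =>
            (∀ t, c.grab t ≠ v) ∧ π v < π (c.rootOrder j).1).card := by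
    intro π j
    simp only [rnk]
  -- step 1 : tsum as a finite sum
  have h1 : (∑' s : {s : SysSt n x // realizes c s}, sysLaw n x s.1)
      = ∑ s ∈ Finset.univ.filter (fun s : SysSt n x => realizes c s), sysLaw n x s := by
    rw [tsum_fintype]
    exact (Finset.sum_subtype _ (fun s => by simp) (sysLaw n x)).symm
  -- step 2 : reindex by the permutation
  set Pi : Finset (Equiv.Perm (Fin n)) := Finset.univ.filter
    (fun π : Equiv.Perm (Fin n) => ∀ j : Fin k,
      rnk (fun v => ∀ t, c.grab t ≠ v) c.rootOrder π j = (j : ℕ)) with hPi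
  have h2 : Finset.univ.filter (fun s : SysSt n x => realizes c s)
      = Pi.image (fun π => (@id (SysSt n x) (c.armEnum, c.grab, π))) := by
    ext s
    simp only [hPi, Finset.mem_filter, Finset.mem_univ, true_and, Finset.mem_image]
    constructor
    · rintro ⟨hs1, hs2, hs3⟩
      refine ⟨s.2.2, fun j => by rw [hrnk]; exact hs3 j, ?_⟩
      rw [← hs1, ← hs2]
      rfl
    · rintro ⟨π, hπ, rfl⟩
      refine ⟨rfl, rfl, fun j => ?_⟩
      show (Finset.univ.filter fun v =>
          (∀ t, c.grab t ≠ v) ∧ π v < π (c.rootOrder j).1).card = (j : ℕ)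
      rw [← hrnk π j]
      exact hπ j
  have h3 : ∑ s ∈ Finset.univ.filter (fun s : SysSt n x => realizes c s), sysLaw n x s
      = ∑ π ∈ Pi, sysLaw n x (c.armEnum, c.grab, π) := by
    rw [h2, Finset.sum_image]
    · rfl
    intro a _ b _ hab
    exact congrArg (fun z : SysSt n x => z.2.2) hab
  -- step 3 : evaluate each term
  have hrun : runGrab x c.armEnum 0 (Nat.zero_le _) (fun t => t.elim0) c.grab
      = ∏ i ∈ Finset.Ico 0 (NArms n x), (((n - i - 1 : ℕ) : ℝ≥0∞))⁻¹ := by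
    have h0 : (fun t : Fin 0 => t.elim0 : Fin 0 → Fin n)
        = fun s : Fin 0 => c.grab (Fin.castLE (Nat.zero_le _) s) := by
      funext s; exact s.elim0
    rw [h0]
    exact runGrab_apply hmn (NArms n x) 0 (Nat.zero_le _) c.grab (by omega) hgood
  have hterm : ∀ π : Equiv.Perm (Fin n),
      sysLaw n x (c.armEnum, c.grab, π)
        = (↑(Fintype.card (Fin (NArms n x) ≃ ArmIdx n x)) : ℝ≥0∞)⁻¹ *
          ((↑(Fintype.card (Equiv.Perm (Fin n))) : ℝ≥0∞)⁻¹ *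
            ∏ i ∈ Finset.Ico 0 (NArms n x), (((n - i - 1 : ℕ) : ℝ≥0∞))⁻¹) := by
    intro π
    erw [sysLaw_apply]
    dsimp only
    rw [hrun]
  -- step 4 : the permutation count
  have hA : Pi.card * k.factorial = Fintype.card (Equiv.Perm (Fin n)) := by
    have h := card_perm_rank _ c.rootOrder hrootcard
    rwa [Nat.card_eq_fintype_card, Fintype.card_subtype, ← hPi] at h
  -- assemble
  rw [h1, h3, Finset.sum_congr rfl (fun π _ => hterm π), Finset.sum_const, nsmul_eq_mul]
  rw [card_GPConfig n k hk hkn x hsum]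
  -- notation
  set E := Fintype.card (Fin (NArms n x) ≃ ArmIdx n x) with hE
  set P := Fintype.card (Equiv.Perm (Fin n)) with hP
  set F := ∏ i ∈ Finset.Ico 0 (NArms n x), (n - i - 1) with hF
  set A := Pi.card with hAdef
  -- nonvanishing facts
  have hfne : ∀ i ∈ Finset.Ico 0 (NArms n x), ((n - i - 1 : ℕ) : ℝ≥0∞) ≠ 0 := by
    intro i hi
    rw [Finset.mem_Ico] at hi
    exact Nat.cast_ne_zero.mpr (by omega)
  have hprodinv : (∏ i ∈ Finset.Ico 0 (NArms n x), (((n - i - 1 : ℕ) : ℝ≥0∞))⁻¹)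
      = ((F : ℕ) : ℝ≥0∞)⁻¹ := by
    rw [hF, Nat.cast_prod, ENNReal.prod_inv_distrib]
    intro i hi j hj _
    exact Or.inl (hfne i hi)
  have hPpos : P ≠ 0 := Fintype.card_ne_zero
  have hApos : A ≠ 0 := by
    intro h0
    rw [h0, zero_mul] at hA
    exact hPpos hA.symm
  have hEpos : E ≠ 0 := Fintype.card_ne_zero
  have hFpos : F ≠ 0 := by
    rw [hF]
    apply Finset.prod_ne_zero_iff.mpr
    intro i hi
    rw [Finset.mem_Ico] at hi
    omega
  have hPcast : ((P : ℕ) : ℝ≥0∞) = (A : ℝ≥0∞) * (k.factorial : ℝ≥0∞) := by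
    rw [← hA]; push_cast; ring
  have hPinv : ((P : ℕ) : ℝ≥0∞)⁻¹ = ((A : ℕ) : ℝ≥0∞)⁻¹ * ((k.factorial : ℕ) : ℝ≥0∞)⁻¹ := by
    rw [hPcast, ENNReal.mul_inv (Or.inl (Nat.cast_ne_zero.mpr hApos))
      (Or.inl (ENNReal.natCast_ne_top _))]
  have hRHS : ((E * (F * k.factorial) : ℕ) : ℝ≥0∞)⁻¹
      = ((E : ℕ) : ℝ≥0∞)⁻¹ * (((F : ℕ) : ℝ≥0∞)⁻¹ * ((k.factorial : ℕ) : ℝ≥0∞)⁻¹) := by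
    push_cast
    rw [ENNReal.mul_inv (Or.inl (Nat.cast_ne_zero.mpr hEpos)) (Or.inl (ENNReal.natCast_ne_top _)),
      ENNReal.mul_inv (Or.inl (Nat.cast_ne_zero.mpr hFpos)) (Or.inl (ENNReal.natCast_ne_top _))]
  rw [hprodinv, hPinv, hRHS]
  have hAA : ((A : ℕ) : ℝ≥0∞) * ((A : ℕ) : ℝ≥0∞)⁻¹ = 1 :=
    ENNReal.mul_inv_cancel (Nat.cast_ne_zero.mpr hApos) (ENNReal.natCast_ne_top _)
  calc (A : ℝ≥0∞) * ((E : ℝ≥0∞)⁻¹ * (((A : ℝ≥0∞)⁻¹ * ((k.factorial : ℕ) : ℝ≥0∞)⁻¹) *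
          ((F : ℕ) : ℝ≥0∞)⁻¹))
      = ((A : ℝ≥0∞) * (A : ℝ≥0∞)⁻¹) * ((E : ℝ≥0∞)⁻¹ *
          (((F : ℕ) : ℝ≥0∞)⁻¹ * ((k.factorial : ℕ) : ℝ≥0∞)⁻¹)) := by ring
    _ = (E : ℝ≥0∞)⁻¹ * (((F : ℕ) : ℝ≥0∞)⁻¹ * ((k.factorial : ℕ) : ℝ≥0∞)⁻¹) := by
        rw [hAA, one_mul]
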